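/- Let 𝒢 be an abelian semigroup of affine maps of ℂⁿ generated by f₁,…,f_p (p≥1) such that G=Φ(𝒢) is contained in K_{η,r}(ℂ) for some partition η=(n₁,…,n_r) of n+1. If J_𝒢(v)=ℂⁿ for some v∈U', then the orbit 𝒢(v) is dense in ℂⁿ. -/

import Mathlib

open Filter Topology

/-- An affine map `x ↦ A x + a` on `ℂⁿ`, encoded by the pair `(A, a)`
    of its linear part and translation part. -/
abbrev AffMap (n : ℕ) := Matrix (Fin n) (Fin n) ℂ × (Fin n → ℂ)

/-- The action of the affine map `f = (A, a)` on a vector: `f x = A x + a`. -/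
noncomputable def affApply {n : ℕ} (f : AffMap n) (x : Fin n → ℂ) : Fin n → ℂ :=
  f.1.mulVec x + f.2

/-- The composition of affine maps, as pairs: `(A,a) ∘ (B,b) = (A B, A b + a)`. -/
noncomputable def affComp {n : ℕ} (f g : AffMap n) : AffMap n :=
  (f.1 * g.1, f.1.mulVec g.2 + f.2)

/-- The map `f₁^{k₁} ∘ f₂^{k₂} ∘ ⋯ ∘ f_p^{k_p}`. -/
noncomputable def wordApply {n p : ℕ} (f : Fin p → AffMap n) (k : Fin p → ℕ) :
    (Fin n → ℂ) → (Fin n → ℂ) :=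
  (List.ofFn fun j => (affApply (f j))^[k j]).foldr (· ∘ ·) id

/-- The orbit `𝒢(x)` of `x` under the semigroup `𝒢` generated by `f₁,…,f_p`. -/
def affOrbit {n p : ℕ} (f : Fin p → AffMap n) (x : Fin n → ℂ) : Set (Fin n → ℂ) :=
  {y | ∃ k : Fin p → ℕ, 1 ≤ ∑ j, k j ∧ wordApply f k x = y}

/-- The extended limit set `J_𝒢(x)` of the semigroup generated by `f₁,…,f_p`. -/
def Jset {n p : ℕ} (f : Fin p → AffMap n) (x : Fin n → ℂ) : Set (Fin n → ℂ) :=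
  {y | ∃ (xs : ℕ → Fin n → ℂ) (k : ℕ → Fin p → ℕ),
    Tendsto xs atTop (𝓝 x) ∧
    Tendsto (fun m => ∑ j, k m j) atTop atTop ∧
    Tendsto (fun m => wordApply f (k m) (xs m)) atTop (𝓝 y)}

/-- `𝒢` is hypercyclic: some orbit is dense. -/
def AffHypercyclic {n p : ℕ} (f : Fin p → AffMap n) : Prop :=
  ∃ v : Fin n → ℂ, Dense (affOrbit f v)

/-- The embedding `Φ : MA(n,ℂ) → M_{n+1}(ℂ)`, `(A,a) ↦ [[1,0],[a,A]]`. -/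
def Phi {n : ℕ} (f : AffMap n) : Matrix (Fin (n + 1)) (Fin (n + 1)) ℂ :=
  Matrix.of fun i j =>
    Fin.cases (Fin.cases (1 : ℂ) (fun _ => 0) j)
      (fun i' => Fin.cases (f.2 i') (fun j' => f.1 i' j') j) i

/-- The matrix `B₁^{k₁} B₂^{k₂} ⋯ B_p^{k_p}`. -/
noncomputable def wordMat {m p : ℕ} (B : Fin p → Matrix (Fin m) (Fin m) ℂ) (k : Fin p → ℕ) :
    Matrix (Fin m) (Fin m) ℂ :=
  (List.ofFn fun j => B j ^ k j).prod

/-- The index at which the `k`-th diagonal block of the partition `η` begins. -/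
def blockStart {r : ℕ} (η : Fin r → ℕ) (k : Fin r) : ℕ :=
  ∑ l ∈ Finset.Iio k, η l

/-- `i` is an index belonging to the `k`-th block of the partition `η`. -/
def inBlock {r m : ℕ} (η : Fin r → ℕ) (k : Fin r) (i : Fin m) : Prop :=
  blockStart η k ≤ (i : ℕ) ∧ (i : ℕ) < blockStart η k + η k

/-- `K_{η,r}(ℂ) = T_{n₁}(ℂ) ⊕ ⋯ ⊕ T_{n_r}(ℂ)`: block-diagonal matrices whose
    `k`-th diagonal block is lower triangular with constant diagonal. -/
def Kset (n r : ℕ) (η : Fin r → ℕ) : Set (Matrix (Fin (n + 1)) (Fin (n + 1)) ℂ) :=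
  {A | (∀ i j : Fin (n + 1), (¬ ∃ k, inBlock η k i ∧ inBlock η k j) → A i j = 0) ∧
       (∀ i j : Fin (n + 1), (∃ k, inBlock η k i ∧ inBlock η k j) → (i : ℕ) < (j : ℕ) → A i j = 0) ∧
       (∀ k : Fin r, ∀ i j : Fin (n + 1), inBlock η k i → inBlock η k j → A i i = A j j)}

/-- `U' ⊆ ℂⁿ`: those `x` such that `(1,x) ∈ ∏_k (ℂ* × ℂ^{n_k-1})`, i.e. the
    coordinate of `(1,x)` at the start of each block is nonzero. -/
def Uprime (n r : ℕ) (η : Fin r → ℕ) : Set (Fin n → ℂ) :=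
  {x | ∀ k : Fin r, ∀ i : Fin (n + 1), (i : ℕ) = blockStart η k → (Fin.cons 1 x : Fin (n + 1) → ℂ) i ≠ 0}

/-- The set of scalar matrices `{λ I : λ ∈ ℂ}`. -/
def scalarMats (m : ℕ) : Set (Matrix (Fin m) (Fin m) ℂ) :=
  Set.range fun c : ℂ => c • (1 : Matrix (Fin m) (Fin m) ℂ)

/-- The vector `u₀ = (e_{1,1}, …, e_{r,1}) ∈ ℂ^{n+1}`: coordinate `1` at the
    start of each block, `0` elsewhere. -/
noncomputable def u0vec (n r : ℕ) (η : Fin r → ℕ) : Fin (n + 1) → ℂ :=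
  open Classical in
  fun i => if ∃ k : Fin r, (i : ℕ) = blockStart η k then 1 else 0

section AffAux
variable {n p : ℕ}

lemma phi_apply_zero_zero (g : AffMap n) : Phi g 0 0 = 1 := rfl
lemma phi_apply_zero_succ (g : AffMap n) (j : Fin n) : Phi g 0 j.succ = 0 := rfl
lemma phi_apply_succ_zero (g : AffMap n) (i : Fin n) : Phi g i.succ 0 = g.2 i := rfl
lemma phi_apply_succ_succ (g : AffMap n) (i j : Fin n) : Phi g i.succ j.succ = g.1 i j := rfl

lemma phi_mulVec (g : AffMap n) (x : Fin n → ℂ) :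
    (Phi g).mulVec (Fin.cons 1 x) = Fin.cons 1 (affApply g x) := by
  funext i
  refine Fin.cases ?_ (fun i' => ?_) i
  · simp [Matrix.mulVec, dotProduct, Fin.sum_univ_succ, phi_apply_zero_zero,
      phi_apply_zero_succ]
  · simp only [Matrix.mulVec, dotProduct, Fin.sum_univ_succ, phi_apply_succ_zero,
      phi_apply_succ_succ, affApply, Fin.cons_succ, Fin.cons_zero, Pi.add_apply, mul_one]
    ring

lemma phi_mul (g h : AffMap n) : Phi (affComp g h) = Phi g * Phi h := by
  funext i j
  refine Fin.cases ?_ (fun i' => ?_) i <;> refine Fin.cases ?_ (fun j' => ?_) j <;>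
    · simp only [Matrix.mul_apply, Fin.sum_univ_succ, phi_apply_zero_zero, phi_apply_zero_succ,
        phi_apply_succ_zero, phi_apply_succ_succ, affComp, Matrix.mulVec, dotProduct,
        Pi.add_apply, mul_one, one_mul, mul_zero, zero_mul, add_zero, zero_add,
        Finset.sum_const_zero, Matrix.mul_apply]
      try ring

end AffAux

section AffAux2
variable {n p : ℕ}

lemma phi_pow_mulVec (g : AffMap n) (m : ℕ) (x : Fin n → ℂ) :
    (Phi g ^ m).mulVec (Fin.cons 1 x) = Fin.cons 1 ((affApply g)^[m] x) := by
  induction m generalizing x with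
  | zero => simp [Matrix.one_mulVec]
  | succ m ih =>
    rw [pow_succ, ← Matrix.mulVec_mulVec, phi_mulVec, ih, Function.iterate_succ_apply]

lemma wordMat_mulVec : ∀ {p : ℕ} (f : Fin p → AffMap n) (k : Fin p → ℕ) (x : Fin n → ℂ),
    (wordMat (fun j => Phi (f j)) k).mulVec (Fin.cons 1 x) = Fin.cons 1 (wordApply f k x)
  | 0, f, k, x => by simp [wordMat, wordApply, Matrix.one_mulVec]
  | (p+1), f, k, x => by
      simp only [wordMat, wordApply, List.ofFn_succ, List.prod_cons, List.foldr_cons]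
      rw [← Matrix.mulVec_mulVec]
      have ih := wordMat_mulVec (fun j => f j.succ) (fun j => k j.succ) x
      simp only [wordMat, wordApply] at ih
      rw [ih, phi_pow_mulVec]
      rfl

lemma wordMat_zero {m : ℕ} (B : Fin p → Matrix (Fin m) (Fin m) ℂ) :
    wordMat B 0 = 1 := by
  apply List.prod_eq_one
  intro x hx
  simp only [List.mem_ofFn] at hx
  obtain ⟨j, rfl⟩ := hx
  simp

lemma wordMat_of_sum_eq_zero {m : ℕ} (B : Fin p → Matrix (Fin m) (Fin m) ℂ)
    {k : Fin p → ℕ} (hk : ∑ j, k j = 0) : wordMat B k = 1 := by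
  have : k = 0 := by
    funext j
    exact Finset.sum_eq_zero_iff.mp hk j (Finset.mem_univ j)
  rw [this, wordMat_zero]

lemma wordMat_mul {m : ℕ} : ∀ {p : ℕ} (B : Fin p → Matrix (Fin m) (Fin m) ℂ),
    (∀ i j, Commute (B i) (B j)) → ∀ (k l : Fin p → ℕ),
    wordMat B (k + l) = wordMat B k * wordMat B l
  | 0, B, hB, k, l => by simp [wordMat]
  | (p+1), B, hB, k, l => by
      have ih := wordMat_mul (fun j => B j.succ) (fun i j => hB i.succ j.succ)
        (fun j => k j.succ) (fun j => l j.succ)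
      simp only [wordMat, List.ofFn_succ, List.prod_cons] at ih ⊢
      have hkl : ∀ j : Fin (p+1), (k + l) j = k j + l j := fun j => rfl
      have htail : (List.ofFn fun i : Fin p => B i.succ ^ (k + l) i.succ).prod
          = (List.ofFn fun i : Fin p => B i.succ ^ k i.succ).prod *
            (List.ofFn fun i : Fin p => B i.succ ^ l i.succ).prod := by
        have : (fun i : Fin p => B i.succ ^ (k + l) i.succ)
            = fun i : Fin p => B i.succ ^ (k i.succ + l i.succ) := rfl
        rw [this]
        have := ih
        exact this
      rw [hkl, pow_add, htail]
      have hc : Commute ((List.ofFn fun i : Fin p => B i.succ ^ k i.succ).prod) (B 0 ^ l 0) := by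
        apply (Commute.list_prod_right _ _ ?_).symm
        intro x hx
        simp only [List.mem_ofFn] at hx
        obtain ⟨j, rfl⟩ := hx
        exact ((hB 0 j.succ).pow_pow _ _)
      rw [mul_assoc (B 0 ^ k 0), mul_assoc (B 0 ^ k 0), ← mul_assoc (B 0 ^ l 0),
        ← hc.eq, mul_assoc]

end AffAux2

section Blocks
variable {r : ℕ} {η : Fin r → ℕ}

lemma sum_insert_Iio (k : Fin r) :
    blockStart η k + η k = ∑ l ∈ insert k (Finset.Iio k), η l := by
  rw [Finset.sum_insert (by simp), blockStart, add_comm]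

lemma blockStart_add_le_of_lt {k k' : Fin r} (h : k < k') :
    blockStart η k + η k ≤ blockStart η k' := by
  rw [sum_insert_Iio]
  apply Finset.sum_le_sum_of_subset
  intro l hl
  simp only [Finset.mem_insert, Finset.mem_Iio] at hl ⊢
  rcases hl with rfl | hl
  · exact h
  · exact hl.trans h

lemma blockStart_add_le {N : ℕ} (hsum : ∑ k, η k = N) (k : Fin r) :
    blockStart η k + η k ≤ N := by
  rw [sum_insert_Iio, ← hsum]
  exact Finset.sum_le_sum_of_subset (Finset.subset_univ _)

lemma exists_block {N : ℕ} (hr : 1 ≤ r) (hsum : ∑ k, η k = N) (i : ℕ) (hi : i < N) :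
    ∃ k, blockStart η k ≤ i ∧ i < blockStart η k + η k := by
  classical
  set s := Finset.univ.filter (fun k : Fin r => blockStart η k ≤ i) with hs
  have h0 : (⟨0, hr⟩ : Fin r) ∈ s := by
    have : Finset.Iio (⟨0, hr⟩ : Fin r) = ∅ := by
      ext l; simp [Fin.lt_def]
    rw [hs]
    refine Finset.mem_filter.mpr ⟨Finset.mem_univ _, ?_⟩
    rw [blockStart, this, Finset.sum_empty]
    exact Nat.zero_le _
  have hne : s.Nonempty := ⟨_, h0⟩
  set k := s.max' hne with hkdef
  have hk1 : blockStart η k ≤ i := (Finset.mem_filter.mp (s.max'_mem hne)).2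
  refine ⟨k, hk1, ?_⟩
  by_contra hcon
  push_neg at hcon
  rcases lt_or_ge (k.val + 1) r with h | h
  · set k' : Fin r := ⟨k.val + 1, h⟩ with hk'
    have hsub : Finset.Iio k' ⊆ insert k (Finset.Iio k) := by
      intro l hl
      simp only [Finset.mem_Iio, Finset.mem_insert, Fin.lt_def, hk'] at hl ⊢
      rcases Nat.lt_or_ge l.val k.val with h' | h'
      · exact Or.inr h'
      · exact Or.inl (Fin.ext (by omega))
    have hle : blockStart η k' ≤ blockStart η k + η k := by
      rw [sum_insert_Iio]
      exact Finset.sum_le_sum_of_subset hsub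
    have hmem : k' ∈ s := Finset.mem_filter.mpr ⟨Finset.mem_univ _, hle.trans hcon⟩
    have := s.le_max' k' hmem
    rw [← hkdef] at this
    exact absurd this (by simp [Fin.le_def, hk'])
  · have hsub : (Finset.univ : Finset (Fin r)) ⊆ insert k (Finset.Iio k) := by
      intro l _
      simp only [Finset.mem_insert, Finset.mem_Iio, Fin.lt_def]
      have : l.val < r := l.isLt
      rcases Nat.lt_or_ge l.val k.val with h' | h'
      · exact Or.inr h'
      · exact Or.inl (Fin.ext (by omega))
    have : N ≤ blockStart η k + η k := by
      rw [sum_insert_Iio, ← hsum]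
      exact Finset.sum_le_sum_of_subset hsub
    omega

lemma inBlock_unique {m : ℕ} {k k' : Fin r} {i : Fin m}
    (h : inBlock η k i) (h' : inBlock η k' i) : k = k' := by
  by_contra hne
  rcases lt_or_gt_of_ne hne with hlt | hlt
  · have := blockStart_add_le_of_lt (η := η) hlt
    have h1 := h.2; have h2 := h'.1
    omega
  · have := blockStart_add_le_of_lt (η := η) hlt
    have h1 := h'.2; have h2 := h.1
    omega

end Blocks

section KsetLemmas
variable {n r : ℕ} {η : Fin r → ℕ}

lemma Kset_row_start {A : Matrix (Fin (n+1)) (Fin (n+1)) ℂ} (hA : A ∈ Kset n r η)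
    {k : Fin r} {i0 : Fin (n+1)} (hi0 : (i0 : ℕ) = blockStart η k) (hη : ∀ k, 1 ≤ η k)
    (j : Fin (n+1)) (hj : j ≠ i0) : A i0 j = 0 := by
  have hb : inBlock η k i0 := ⟨le_of_eq hi0.symm, by have := hη k; omega⟩
  by_cases hex : ∃ k', inBlock η k' i0 ∧ inBlock η k' j
  · obtain ⟨k', hk1, hk2⟩ := hex
    have hkk : k' = k := inBlock_unique hk1 hb
    subst hkk
    apply hA.2.1 _ _ ⟨k', hk1, hk2⟩
    have h1 := hk2.1
    have h2 : (j : ℕ) ≠ (i0 : ℕ) := fun hc => hj (Fin.ext hc)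
    omega
  · exact hA.1 _ _ hex

lemma Kset_mulVec_start {A : Matrix (Fin (n+1)) (Fin (n+1)) ℂ} (hA : A ∈ Kset n r η)
    {k : Fin r} {i0 : Fin (n+1)} (hi0 : (i0 : ℕ) = blockStart η k) (hη : ∀ k, 1 ≤ η k)
    (x : Fin (n+1) → ℂ) : A.mulVec x i0 = A i0 i0 * x i0 := by
  unfold Matrix.mulVec dotProduct
  apply Finset.sum_eq_single
  · intro b _ hb
    show A i0 b * x b = 0
    rw [Kset_row_start hA hi0 hη b hb, zero_mul]
  · intro h; exact absurd (Finset.mem_univ _) h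

lemma Kset_strictLower {A : Matrix (Fin (n+1)) (Fin (n+1)) ℂ} (hA : A ∈ Kset n r η)
    (hr : 1 ≤ r) (hη : ∀ k, 1 ≤ η k) (hsum : ∑ k, η k = n + 1)
    (hdiag : ∀ (k : Fin r) (i0 : Fin (n+1)), (i0 : ℕ) = blockStart η k → A i0 i0 = 0)
    {i j : Fin (n+1)} (h : ¬ (j : ℕ) < (i : ℕ)) : A i j = 0 := by
  by_cases hex : ∃ k', inBlock η k' i ∧ inBlock η k' j
  · rcases Nat.lt_or_ge (i : ℕ) (j : ℕ) with hlt | hge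
    · exact hA.2.1 _ _ hex hlt
    · have hij : i = j := Fin.ext (by omega)
      subst hij
      obtain ⟨k', hk1, _⟩ := hex
      obtain ⟨kb, hkb1, hkb2⟩ : ∃ kb, inBlock η kb i ∧ True := ⟨k', hk1, trivial⟩
      have hstartlt : blockStart η kb < n + 1 := by
        have h1 := hkb1.1; have h2 := i.isLt; omega
      set i0 : Fin (n+1) := ⟨blockStart η kb, hstartlt⟩ with hi0def
      have hbi0 : inBlock η kb i0 := ⟨le_refl _, by have := hη kb; simp [hi0def]; omega⟩
      have := hA.2.2 kb i i0 hkb1 hbi0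
      rw [this, hdiag kb i0 rfl]
  · exact hA.1 _ _ hex

lemma one_mem_Kset (hr : 1 ≤ r) (hη : ∀ k, 1 ≤ η k) (hsum : ∑ k, η k = n + 1) :
    (1 : Matrix (Fin (n+1)) (Fin (n+1)) ℂ) ∈ Kset n r η := by
  refine ⟨?_, ?_, ?_⟩
  · intro i j hex
    by_cases hij : i = j
    · subst hij
      obtain ⟨k, hk1, hk2⟩ := exists_block (η := η) hr hsum (i : ℕ) i.isLt
      exact absurd ⟨k, ⟨hk1, hk2⟩, ⟨hk1, hk2⟩⟩ hex
    · simp [Matrix.one_apply_ne hij]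
  · intro i j _ hlt
    have : i ≠ j := fun hc => by subst hc; omega
    simp [Matrix.one_apply_ne this]
  · intro k i j _ _
    simp [Matrix.one_apply]

end KsetLemmas

section SubmoduleLayer
variable {n p r : ℕ}

noncomputable def evv {n : ℕ} (vt : Fin (n+1) → ℂ) :
    Matrix (Fin (n+1)) (Fin (n+1)) ℂ →ₗ[ℂ] (Fin (n+1) → ℂ) where
  toFun := fun B => B.mulVec vt
  map_add' := fun A B => Matrix.add_mulVec A B vt
  map_smul' := fun c A => Matrix.smul_mulVec c A vt

lemma evv_apply {n : ℕ} (vt : Fin (n+1) → ℂ) (B : Matrix (Fin (n+1)) (Fin (n+1)) ℂ) :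
    evv vt B = B.mulVec vt := rfl

def startIdx (η : Fin r → ℕ) (n : ℕ) (k : Fin r) : Fin (n+1) :=
  ⟨min (blockStart η k) n, by have := Nat.min_le_right (blockStart η k) n; omega⟩

lemma startIdx_val {η : Fin r → ℕ} (hη : ∀ k, 1 ≤ η k) (hsum : ∑ k, η k = n + 1) (k : Fin r) :
    (startIdx η n k : ℕ) = blockStart η k := by
  have h := blockStart_add_le hsum k
  have := hη k
  simp only [startIdx]
  omega

noncomputable def lamMap (η : Fin r → ℕ) (n : ℕ) :
    Matrix (Fin (n+1)) (Fin (n+1)) ℂ →ₗ[ℂ] (Fin r → ℂ) where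
  toFun := fun B k => B (startIdx η n k) (startIdx η n k)
  map_add' := by intros; funext k; simp [Matrix.add_apply]
  map_smul' := by intros; funext k; simp

noncomputable def Ksub (n r : ℕ) (η : Fin r → ℕ) : Submodule ℂ (Matrix (Fin (n+1)) (Fin (n+1)) ℂ) where
  carrier := Kset n r η
  zero_mem' := ⟨fun i j _ => rfl, fun i j _ _ => rfl, fun k i j _ _ => rfl⟩
  add_mem' := by
    rintro a b ⟨ha1, ha2, ha3⟩ ⟨hb1, hb2, hb3⟩
    refine ⟨fun i j h => ?_, fun i j h h' => ?_, fun k i j h h' => ?_⟩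
    · show a i j + b i j = 0
      rw [ha1 i j h, hb1 i j h, add_zero]
    · show a i j + b i j = 0
      rw [ha2 i j h h', hb2 i j h h', add_zero]
    · show a i i + b i i = a j j + b j j
      rw [ha3 k i j h h', hb3 k i j h h']
  smul_mem' := by
    rintro c a ⟨ha1, ha2, ha3⟩
    refine ⟨fun i j h => ?_, fun i j h h' => ?_, fun k i j h h' => ?_⟩
    · show c * a i j = 0
      rw [ha1 i j h, mul_zero]
    · show c * a i j = 0
      rw [ha2 i j h h', mul_zero]
    · show c * a i i = c * a j j
      rw [ha3 k i j h h']

noncomputable def Aspan (f : Fin p → AffMap n) : Submodule ℂ (Matrix (Fin (n+1)) (Fin (n+1)) ℂ) :=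
  Submodule.span ℂ (Set.range (wordMat (fun j => Phi (f j))))

variable {f : Fin p → AffMap n}

lemma word_mem_Aspan (k : Fin p → ℕ) : wordMat (fun j => Phi (f j)) k ∈ Aspan f :=
  Submodule.subset_span ⟨k, rfl⟩

lemma one_mem_Aspan : (1 : Matrix (Fin (n+1)) (Fin (n+1)) ℂ) ∈ Aspan f := by
  have := word_mem_Aspan (f := f) 0
  rwa [wordMat_zero] at this

lemma phi_commute (hcomm : ∀ i j, affComp (f i) (f j) = affComp (f j) (f i)) (i j : Fin p) :
    Commute (Phi (f i)) (Phi (f j)) := by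
  unfold Commute SemiconjBy
  rw [← phi_mul, ← phi_mul, hcomm]

lemma Aspan_mul_word (hcomm : ∀ i j, affComp (f i) (f j) = affComp (f j) (f i))
    (k : Fin p → ℕ) {b : Matrix (Fin (n+1)) (Fin (n+1)) ℂ} (hb : b ∈ Aspan f) :
    wordMat (fun j => Phi (f j)) k * b ∈ Aspan f := by
  induction hb using Submodule.span_induction with
  | mem x hx =>
    obtain ⟨l, rfl⟩ := hx
    rw [← wordMat_mul _ (phi_commute hcomm)]
    exact word_mem_Aspan _
  | zero => simp
  | add x y hx hy ihx ihy => rw [mul_add]; exact add_mem ihx ihy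
  | smul c x hx ihx => rw [mul_smul_comm]; exact Submodule.smul_mem _ _ ihx

lemma Aspan_mul_mem (hcomm : ∀ i j, affComp (f i) (f j) = affComp (f j) (f i))
    {a b : Matrix (Fin (n+1)) (Fin (n+1)) ℂ} (ha : a ∈ Aspan f) (hb : b ∈ Aspan f) :
    a * b ∈ Aspan f := by
  induction ha using Submodule.span_induction with
  | mem x hx =>
    obtain ⟨k, rfl⟩ := hx
    exact Aspan_mul_word hcomm k hb
  | zero => simp
  | add x y hx hy ihx ihy => rw [add_mul]; exact add_mem ihx ihy
  | smul c x hx ihx => rw [smul_mul_assoc]; exact Submodule.smul_mem _ _ ihx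

lemma word_commute_Aspan (hcomm : ∀ i j, affComp (f i) (f j) = affComp (f j) (f i))
    (k : Fin p → ℕ) {b : Matrix (Fin (n+1)) (Fin (n+1)) ℂ} (hb : b ∈ Aspan f) :
    wordMat (fun j => Phi (f j)) k * b = b * wordMat (fun j => Phi (f j)) k := by
  induction hb using Submodule.span_induction with
  | mem x hx =>
    obtain ⟨l, rfl⟩ := hx
    rw [← wordMat_mul _ (phi_commute hcomm), ← wordMat_mul _ (phi_commute hcomm), add_comm k l]
  | zero => simp
  | add x y hx hy ihx ihy => rw [mul_add, add_mul, ihx, ihy]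
  | smul c x hx ihx => rw [mul_smul_comm, smul_mul_assoc, ihx]

lemma Aspan_commute (hcomm : ∀ i j, affComp (f i) (f j) = affComp (f j) (f i))
    {a b : Matrix (Fin (n+1)) (Fin (n+1)) ℂ} (ha : a ∈ Aspan f) (hb : b ∈ Aspan f) :
    a * b = b * a := by
  induction ha using Submodule.span_induction with
  | mem x hx =>
    obtain ⟨k, rfl⟩ := hx
    exact word_commute_Aspan hcomm k hb
  | zero => simp
  | add x y hx hy ihx ihy => rw [add_mul, mul_add, ihx, ihy]
  | smul c x hx ihx => rw [smul_mul_assoc, mul_smul_comm, ihx]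

lemma Aspan_le_Ksub {η : Fin r → ℕ} (hr : 1 ≤ r) (hη : ∀ k, 1 ≤ η k)
    (hsum : ∑ k, η k = n + 1)
    (hK : ∀ k : Fin p → ℕ, 1 ≤ ∑ j, k j → wordMat (fun j => Phi (f j)) k ∈ Kset n r η) :
    Aspan f ≤ Ksub n r η := by
  rw [Aspan, Submodule.span_le]
  rintro x ⟨k, rfl⟩
  by_cases h : 1 ≤ ∑ j, k j
  · exact hK k h
  · have : ∑ j, k j = 0 := by omega
    rw [wordMat_of_sum_eq_zero _ this]
    exact one_mem_Kset hr hη hsum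

end SubmoduleLayer

section Nakayama
variable {n p r : ℕ}

/-- The "strictly lower" part of the algebra: elements with vanishing block diagonals. -/
noncomputable def Nsub (f : Fin p → AffMap n) (η : Fin r → ℕ) :
    Submodule ℂ (Matrix (Fin (n+1)) (Fin (n+1)) ℂ) :=
  Aspan f ⊓ LinearMap.ker (lamMap η n)

/-- Applying the nilpotent part to a submodule of vectors. -/
noncomputable def NappF (f : Fin p → AffMap n) (η : Fin r → ℕ)
    (U : Submodule ℂ (Fin (n+1) → ℂ)) : Submodule ℂ (Fin (n+1) → ℂ) :=
  Submodule.span ℂ {w | ∃ N ∈ Nsub f η, ∃ z ∈ U, w = N.mulVec z}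

/-- Vectors vanishing in the first `k` coordinates. -/
noncomputable def Sdeg (n k : ℕ) : Submodule ℂ (Fin (n+1) → ℂ) where
  carrier := {x | ∀ i : Fin (n+1), (i : ℕ) < k → x i = 0}
  zero_mem' := fun _ _ => rfl
  add_mem' := by intro a b ha hb i hi; show a i + b i = 0; rw [ha i hi, hb i hi, add_zero]
  smul_mem' := by intro c a ha i hi; show c * a i = 0; rw [ha i hi, mul_zero]

variable {f : Fin p → AffMap n} {η : Fin r → ℕ}

lemma NappF_mono {U U' : Submodule ℂ (Fin (n+1) → ℂ)} (h : U ≤ U') :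
    NappF f η U ≤ NappF f η U' := by
  apply Submodule.span_mono
  rintro w ⟨N, hN, z, hz, rfl⟩
  exact ⟨N, hN, z, h hz, rfl⟩

lemma NappF_iter_mono (t : ℕ) {U U' : Submodule ℂ (Fin (n+1) → ℂ)} (h : U ≤ U') :
    (NappF f η)^[t] U ≤ (NappF f η)^[t] U' := by
  induction t generalizing U U' with
  | zero => simpa using h
  | succ t ih =>
    rw [Function.iterate_succ_apply, Function.iterate_succ_apply]
    exact ih (NappF_mono h)

lemma NappF_Sdeg
    (hstrict : ∀ N ∈ Nsub f η, ∀ i j : Fin (n+1), ¬ (j : ℕ) < (i : ℕ) → N i j = 0)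
    (k : ℕ) : NappF f η (Sdeg n k) ≤ Sdeg n (k+1) := by
  rw [NappF, Submodule.span_le]
  rintro w ⟨N, hN, z, hz, rfl⟩
  intro i hi
  show ∑ j, N i j * z j = 0
  apply Finset.sum_eq_zero
  intro j _
  rcases Nat.lt_or_ge (j : ℕ) k with h | h
  · rw [hz j h, mul_zero]
  · rw [hstrict N hN i j (by omega), zero_mul]

lemma NappF_iter_le_Sdeg
    (hstrict : ∀ N ∈ Nsub f η, ∀ i j : Fin (n+1), ¬ (j : ℕ) < (i : ℕ) → N i j = 0)
    (t : ℕ) : (NappF f η)^[t] ⊤ ≤ Sdeg n t := by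
  induction t with
  | zero => intro x _; exact fun i hi => absurd hi (by omega)
  | succ t ih =>
    rw [Function.iterate_succ_apply']
    exact (NappF_mono ih).trans (NappF_Sdeg hstrict t)

lemma Sdeg_top_bot : Sdeg n (n+1) ≤ ⊥ := by
  intro x hx
  have : x = 0 := funext fun i => hx i i.isLt
  simp [this]

lemma NappF_sup (hcomm : ∀ i j, affComp (f i) (f j) = affComp (f j) (f i))
    (vt : Fin (n+1) → ℂ) (U : Submodule ℂ (Fin (n+1) → ℂ)) :
    NappF f η (Submodule.map (evv vt) (Aspan f) ⊔ U) ≤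
      Submodule.map (evv vt) (Aspan f) ⊔ NappF f η U := by
  rw [NappF, Submodule.span_le]
  rintro w ⟨N, hN, z, hz, rfl⟩
  obtain ⟨a, ha, b, hb, rfl⟩ := Submodule.mem_sup.mp hz
  have : N.mulVec (a + b) = N.mulVec a + N.mulVec b := Matrix.mulVec_add N a b
  rw [SetLike.mem_coe, this]
  apply Submodule.add_mem_sup
  · obtain ⟨B, hB, rfl⟩ := ha
    rw [evv_apply, Matrix.mulVec_mulVec]
    exact ⟨N * B, Aspan_mul_mem hcomm hN.1 hB, rfl⟩
  · exact Submodule.subset_span ⟨N, hN, b, hb, rfl⟩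

lemma NappF_iter_sup (hcomm : ∀ i j, affComp (f i) (f j) = affComp (f j) (f i))
    (vt : Fin (n+1) → ℂ) (t : ℕ) (U : Submodule ℂ (Fin (n+1) → ℂ)) :
    (NappF f η)^[t] (Submodule.map (evv vt) (Aspan f) ⊔ U) ≤
      Submodule.map (evv vt) (Aspan f) ⊔ (NappF f η)^[t] U := by
  induction t generalizing U with
  | zero => simp
  | succ t ih =>
    rw [Function.iterate_succ_apply, Function.iterate_succ_apply]
    exact (NappF_iter_mono t (NappF_sup hcomm vt U)).trans (ih _)

lemma nakayama (hcomm : ∀ i j, affComp (f i) (f j) = affComp (f j) (f i))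
    (hstrict : ∀ N ∈ Nsub f η, ∀ i j : Fin (n+1), ¬ (j : ℕ) < (i : ℕ) → N i j = 0)
    (vt : Fin (n+1) → ℂ)
    (h : ⊤ ≤ Submodule.map (evv vt) (Aspan f) ⊔ NappF f η ⊤) :
    Submodule.map (evv vt) (Aspan f) = ⊤ := by
  set W0 := Submodule.map (evv vt) (Aspan f) with hW0
  have H : ∀ t : ℕ, ⊤ ≤ W0 ⊔ (NappF f η)^[t] ⊤ := by
    intro t
    induction t with
    | zero => simp
    | succ t ih =>
      have h2 : (NappF f η)^[t] ⊤ ≤ (NappF f η)^[t] (W0 ⊔ NappF f η ⊤) :=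
        NappF_iter_mono t h
      have h3 : (NappF f η)^[t] (W0 ⊔ NappF f η ⊤) ≤ W0 ⊔ (NappF f η)^[t+1] ⊤ := by
        rw [Function.iterate_succ_apply]
        exact NappF_iter_sup hcomm vt t _
      calc ⊤ ≤ W0 ⊔ (NappF f η)^[t] ⊤ := ih
        _ ≤ W0 ⊔ (W0 ⊔ (NappF f η)^[t+1] ⊤) := sup_le_sup_left (h2.trans h3) _
        _ = W0 ⊔ (NappF f η)^[t+1] ⊤ := by rw [← sup_assoc, sup_idem]
  have := H (n+1)
  have hbot : (NappF f η)^[n+1] ⊤ ≤ ⊥ := (NappF_iter_le_Sdeg hstrict (n+1)).trans Sdeg_top_bot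
  rw [top_le_iff] at this
  rw [le_bot_iff.mp hbot, sup_bot_eq] at this
  exact this

end Nakayama

section Analytic

lemma tendsto_mulVec_seq {N : ℕ} {A : ℕ → Matrix (Fin N) (Fin N) ℂ}
    {A0 : Matrix (Fin N) (Fin N) ℂ} {x : ℕ → Fin N → ℂ} {x0 : Fin N → ℂ}
    (hA : Filter.Tendsto A Filter.atTop (nhds A0))
    (hx : Filter.Tendsto x Filter.atTop (nhds x0)) :
    Filter.Tendsto (fun m => (A m).mulVec (x m)) Filter.atTop (nhds (A0.mulVec x0)) := by
  rw [tendsto_pi_nhds]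
  intro i
  show Filter.Tendsto (fun m => ∑ j, A m i j * x m j) Filter.atTop (nhds (∑ j, A0 i j * x0 j))
  apply tendsto_finset_sum
  intro j _
  exact (tendsto_pi_nhds.mp (tendsto_pi_nhds.mp hA i) j).mul (tendsto_pi_nhds.mp hx j)

lemma tendsto_cons_one {n : ℕ} {xs : ℕ → Fin n → ℂ} {v : Fin n → ℂ}
    (h : Filter.Tendsto xs Filter.atTop (nhds v)) :
    Filter.Tendsto (fun m => (Fin.cons 1 (xs m) : Fin (n+1) → ℂ)) Filter.atTop
      (nhds (Fin.cons 1 v)) := by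
  rw [tendsto_pi_nhds]
  intro i
  refine Fin.cases ?_ (fun i' => ?_) i
  · simpa using tendsto_const_nhds
  · simpa using tendsto_pi_nhds.mp h i'

end Analytic

section StepA

lemma cons_mem_key {n p r : ℕ} {η : Fin r → ℕ} {f : Fin p → AffMap n} {v : Fin n → ℂ}
    (hr : 1 ≤ r) (hη : ∀ k, 1 ≤ η k) (hsum : ∑ k, η k = n + 1)
    (hK : ∀ k : Fin p → ℕ, 1 ≤ ∑ j, k j → wordMat (fun j => Phi (f j)) k ∈ Kset n r η)
    (hv : v ∈ Uprime n r η)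
    (y : Fin n → ℂ) (hy : y ∈ Jset f v) :
    (Fin.cons 1 y : Fin (n+1) → ℂ) ∈
      Submodule.map (evv (Fin.cons 1 v)) (Aspan f) ⊔ NappF f η ⊤ := by
  classical
  set vt : Fin (n+1) → ℂ := Fin.cons 1 v with hvt
  obtain ⟨xs, kk, hxs, _hksum, hlim⟩ := hy
  have hAK : Aspan f ≤ Ksub n r η := Aspan_le_Ksub hr hη hsum hK
  set B : ℕ → Matrix (Fin (n+1)) (Fin (n+1)) ℂ := fun m => wordMat (fun j => Phi (f j)) (kk m)
    with hBdef
  have hBA : ∀ m, B m ∈ Aspan f := fun m => word_mem_Aspan _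
  have hBK : ∀ m, B m ∈ Kset n r η := fun m => hAK (hBA m)
  set xt : ℕ → Fin (n+1) → ℂ := fun m => Fin.cons 1 (xs m) with hxtdef
  have hxtt : Filter.Tendsto xt Filter.atTop (nhds vt) := tendsto_cons_one hxs
  have hBxt : Filter.Tendsto (fun m => (B m).mulVec (xt m)) Filter.atTop
      (nhds (Fin.cons 1 y)) := by
    apply Filter.Tendsto.congr (f₁ := fun m => Fin.cons 1 (wordApply f (kk m) (xs m)))
    · intro m
      exact (wordMat_mulVec f (kk m) (xs m)).symm
    · exact tendsto_cons_one hlim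
  -- convergence of block diagonals
  set lam : ℕ → Fin r → ℂ := fun m => lamMap η n (B m) with hlamdef
  set mu : Fin r → ℂ :=
    fun k => ((Fin.cons 1 y : Fin (n+1) → ℂ) (startIdx η n k)) * (vt (startIdx η n k))⁻¹
    with hmudef
  have hvne : ∀ k, vt (startIdx η n k) ≠ 0 := fun k => hv k _ (startIdx_val hη hsum k)
  have hlamt : Filter.Tendsto lam Filter.atTop (nhds mu) := by
    rw [tendsto_pi_nhds]
    intro k
    have h1 := tendsto_pi_nhds.mp hBxt (startIdx η n k)
    have heq : ∀ m, ((B m).mulVec (xt m)) (startIdx η n k)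
        = lam m k * xt m (startIdx η n k) := fun m =>
      Kset_mulVec_start (hBK m) (startIdx_val hη hsum k) hη (xt m)
    rw [show (fun m => ((B m).mulVec (xt m)) (startIdx η n k))
        = fun m => lam m k * xt m (startIdx η n k) from funext heq] at h1
    have h2 : Filter.Tendsto (fun m => xt m (startIdx η n k)) Filter.atTop
        (nhds (vt (startIdx η n k))) := tendsto_pi_nhds.mp hxtt _
    have h3 := h1.mul (h2.inv₀ (hvne k))
    refine h3.congr' ?_
    filter_upwards [h2.eventually_ne (hvne k)] with m hm
    field_simp
  -- section of lamMap over the image of Aspan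
  set hmap : ↥(Aspan f) →ₗ[ℂ] (Fin r → ℂ) := (lamMap η n).comp (Aspan f).subtype with hhmap
  obtain ⟨tau, htau⟩ := LinearMap.exists_rightInverse_of_surjective hmap.rangeRestrict
    (LinearMap.range_eq_top.mpr (LinearMap.surjective_rangeRestrict hmap))
  obtain ⟨Lc, hLc⟩ := Submodule.exists_isCompl (LinearMap.range hmap)
  set proj := (LinearMap.range hmap).linearProjOfIsCompl Lc hLc with hproj
  set rho : (Fin r → ℂ) →ₗ[ℂ] Matrix (Fin (n+1)) (Fin (n+1)) ℂ :=
    (Aspan f).subtype ∘ₗ tau ∘ₗ proj with hrho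
  have hrho_mem : ∀ w, rho w ∈ Aspan f := fun w => SetLike.coe_mem _
  have hrho_lam : ∀ w ∈ LinearMap.range hmap, lamMap η n (rho w) = w := by
    intro w hw
    have h1 : proj w = ⟨w, hw⟩ :=
      Submodule.linearProjOfIsCompl_apply_left hLc ⟨w, hw⟩
    have h2 : hmap.rangeRestrict ((tau ∘ₗ LinearMap.id) (proj w)) = proj w := by
      have := LinearMap.ext_iff.mp htau (proj w)
      simpa only [LinearMap.comp_apply, LinearMap.id_apply] using this
    calc lamMap η n (rho w)
        = ((hmap.rangeRestrict (tau (proj w))) : Fin r → ℂ) := rfl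
      _ = ((proj w : ↥(LinearMap.range hmap)) : Fin r → ℂ) := by
          simp only [LinearMap.comp_apply, LinearMap.id_apply] at h2
          rw [h2]
      _ = w := by rw [h1]
  have hlamB : ∀ m, lam m ∈ LinearMap.range hmap := fun m => ⟨⟨B m, hBA m⟩, rfl⟩
  have hmu_mem : mu ∈ LinearMap.range hmap := by
    have hcl : IsClosed ((LinearMap.range hmap : Submodule ℂ (Fin r → ℂ)) : Set (Fin r → ℂ)) :=
      Submodule.closed_of_finiteDimensional _
    exact hcl.mem_of_tendsto hlamt (Filter.Eventually.of_forall hlamB)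
  -- split B m into convergent + nilpotent parts
  set C : ℕ → Matrix (Fin (n+1)) (Fin (n+1)) ℂ := fun m => rho (lam m) with hCdef
  have hCt : Filter.Tendsto C Filter.atTop (nhds (rho mu)) :=
    (rho.continuous_of_finiteDimensional.tendsto mu).comp hlamt
  set Nm : ℕ → Matrix (Fin (n+1)) (Fin (n+1)) ℂ := fun m => B m - C m with hNmdef
  have hNm : ∀ m, Nm m ∈ Nsub f η := by
    intro m
    refine ⟨sub_mem (hBA m) (hrho_mem _), LinearMap.mem_ker.mpr ?_⟩
    rw [map_sub, hrho_lam _ (hlamB m)]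
    exact sub_self _
  have hCx : Filter.Tendsto (fun m => (C m).mulVec (xt m)) Filter.atTop
      (nhds ((rho mu).mulVec vt)) := tendsto_mulVec_seq hCt hxtt
  have hNx : Filter.Tendsto (fun m => (Nm m).mulVec (xt m)) Filter.atTop
      (nhds (Fin.cons 1 y - (rho mu).mulVec vt)) := by
    apply Filter.Tendsto.congr (f₁ := fun m => (B m).mulVec (xt m) - (C m).mulVec (xt m))
    · intro m
      exact (Matrix.sub_mulVec (B m) (C m) (xt m)).symm
    · exact hBxt.sub hCx
  have hmemN : Fin.cons 1 y - (rho mu).mulVec vt ∈ NappF f η ⊤ := by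
    have hcl : IsClosed ((NappF f η ⊤ : Submodule ℂ (Fin (n+1) → ℂ)) : Set (Fin (n+1) → ℂ)) :=
      Submodule.closed_of_finiteDimensional _
    exact hcl.mem_of_tendsto hNx (Filter.Eventually.of_forall fun m =>
      Submodule.subset_span ⟨Nm m, hNm m, xt m, trivial, rfl⟩)
  have hdec : (Fin.cons 1 y : Fin (n+1) → ℂ)
      = (rho mu).mulVec vt + (Fin.cons 1 y - (rho mu).mulVec vt) := by
    rw [add_sub_cancel]
  rw [hdec]
  exact Submodule.add_mem_sup ⟨rho mu, hrho_mem mu, rfl⟩ hmemN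

end StepA

/-- **(Normal-form case of Theorem 1.1.)** Let `𝒢` be an abelian semigroup of
affine maps of `ℂⁿ` generated by `f₁,…,f_p` (`p ≥ 1`) such that `G = Φ(𝒢)` is
contained in `K_{η,r}(ℂ)` for some partition `η = (n₁,…,n_r)` of `n+1`. If
`J_𝒢(v) = ℂⁿ` for some `v ∈ U'`, then `𝒢(v)` is dense in `ℂⁿ`. -/
theorem dense_orbit_of_Jset_eq_univ_of_mem_Uprime
    (n p r : ℕ) (hp : 1 ≤ p) (hr : 1 ≤ r)
    (η : Fin r → ℕ) (hη : ∀ k, 1 ≤ η k) (hsum : ∑ k, η k = n + 1)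
    (f : Fin p → AffMap n)
    (hcomm : ∀ i j, affComp (f i) (f j) = affComp (f j) (f i))
    (hK : ∀ k : Fin p → ℕ, 1 ≤ ∑ j, k j →
      wordMat (fun j => Phi (f j)) k ∈ Kset n r η)
    (v : Fin n → ℂ) (hv : v ∈ Uprime n r η)
    (hJ : Jset f v = Set.univ) :
    Dense (affOrbit f v) := by
  classical
  set vt : Fin (n+1) → ℂ := Fin.cons 1 v with hvt
  have hAK : Aspan f ≤ Ksub n r η := Aspan_le_Ksub hr hη hsum hK
  -- all elements of 𝒩₀ are strictly lower triangular
  have hstrict : ∀ N ∈ Nsub f η, ∀ i j : Fin (n+1), ¬ (j : ℕ) < (i : ℕ) → N i j = 0 := by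
    intro N hN i j hij
    have hNK : N ∈ Kset n r η := hAK hN.1
    refine Kset_strictLower hNK hr hη hsum ?_ hij
    intro k i0 hi0
    have hi0' : i0 = startIdx η n k := Fin.ext (by rw [hi0, startIdx_val hη hsum])
    have hker := LinearMap.mem_ker.mp hN.2
    have h := congrFun hker k
    rw [hi0']
    exact h
  -- Step A: every `(1, y)` lies in `𝒜·ṽ ⊔ 𝒩₀·V`
  have stepA : ∀ y : Fin n → ℂ, (Fin.cons 1 y : Fin (n+1) → ℂ) ∈
      Submodule.map (evv vt) (Aspan f) ⊔ NappF f η ⊤ := fun y =>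
    cons_mem_key hr hη hsum hK hv y (by rw [hJ]; trivial)
  -- hence the sup is everything
  have htop : ⊤ ≤ Submodule.map (evv vt) (Aspan f) ⊔ NappF f η ⊤ := by
    intro x _
    have h0 := stepA 0
    have h1 := stepA (fun i => x i.succ)
    have hx : x = (x 0) • (Fin.cons 1 0 : Fin (n+1) → ℂ)
        + ((Fin.cons 1 (fun i => x i.succ) : Fin (n+1) → ℂ) - Fin.cons 1 0) := by
      funext i
      refine Fin.cases ?_ (fun i' => ?_) i <;> simp
    rw [hx]
    exact add_mem (Submodule.smul_mem _ _ h0) (sub_mem h1 h0)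
  -- Nakayama: ṽ is a cyclic vector for 𝒜
  have hsurj : Submodule.map (evv vt) (Aspan f) = ⊤ := nakayama hcomm hstrict vt htop
  -- a linear section of evaluation at ṽ
  set ev' : ↥(Aspan f) →ₗ[ℂ] (Fin (n+1) → ℂ) := (evv vt).comp (Aspan f).subtype with hev'
  have hev'surj : LinearMap.range ev' = ⊤ := by
    rw [hev', LinearMap.range_comp, Submodule.range_subtype]
    exact hsurj
  obtain ⟨sig0, hsig0⟩ := LinearMap.exists_rightInverse_of_surjective ev' hev'surj
  set sig : (Fin (n+1) → ℂ) →ₗ[ℂ] Matrix (Fin (n+1)) (Fin (n+1)) ℂ :=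
    (Aspan f).subtype ∘ₗ sig0 with hsig
  have hsig_mem : ∀ x, sig x ∈ Aspan f := fun x => SetLike.coe_mem _
  have hsig_val : ∀ x, (sig x).mulVec vt = x := by
    intro x
    have h := LinearMap.ext_iff.mp hsig0 x
    simpa [hsig, hev', evv_apply] using h
  -- density
  rw [dense_iff_closure_eq]
  apply Set.eq_univ_iff_forall.mpr
  intro y
  obtain ⟨xs, kk, hxs, hksum, hlim⟩ : y ∈ Jset f v := by rw [hJ]; trivial
  set B : ℕ → Matrix (Fin (n+1)) (Fin (n+1)) ℂ :=
    fun m => wordMat (fun j => Phi (f j)) (kk m) with hBdef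
  have hBA : ∀ m, B m ∈ Aspan f := fun m => word_mem_Aspan _
  set xt : ℕ → (Fin (n+1) → ℂ) := fun m => Fin.cons 1 (xs m) with hxtdef
  have hxtt : Filter.Tendsto xt Filter.atTop (nhds vt) := tendsto_cons_one hxs
  have hBxt : Filter.Tendsto (fun m => (B m).mulVec (xt m)) Filter.atTop
      (nhds (Fin.cons 1 y)) := by
    apply Filter.Tendsto.congr (f₁ := fun m => Fin.cons 1 (wordApply f (kk m) (xs m)))
    · intro m
      exact (wordMat_mulVec f (kk m) (xs m)).symm
    · exact tendsto_cons_one hlim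
  set Cm : ℕ → Matrix (Fin (n+1)) (Fin (n+1)) ℂ := fun m => 1 + sig (xt m - vt) with hCmdef
  have hCmA : ∀ m, Cm m ∈ Aspan f := fun m => add_mem one_mem_Aspan (hsig_mem _)
  have hCmv : ∀ m, (Cm m).mulVec vt = xt m := by
    intro m
    rw [Matrix.add_mulVec, Matrix.one_mulVec, hsig_val]
    abel
  have hCmt : Filter.Tendsto Cm Filter.atTop (nhds 1) := by
    have h1 : Filter.Tendsto (fun m => xt m - vt) Filter.atTop (nhds (vt - vt)) :=
      hxtt.sub tendsto_const_nhds
    rw [sub_self] at h1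
    have h2 := (sig.continuous_of_finiteDimensional.tendsto 0).comp h1
    rw [map_zero] at h2
    have h3 : Filter.Tendsto (fun m => 1 + sig (xt m - vt)) Filter.atTop
        (nhds (1 + 0)) := tendsto_const_nhds.add h2
    rw [add_zero] at h3
    exact h3
  have hdet : Filter.Tendsto (fun m => (Cm m).det) Filter.atTop (nhds 1) := by
    have hcont : Continuous fun A : Matrix (Fin (n+1)) (Fin (n+1)) ℂ => A.det :=
      continuous_id.matrix_det
    have := (hcont.tendsto 1).comp hCmt
    simpa [Function.comp_def] using this
  have hdetne : ∀ᶠ m in Filter.atTop, (Cm m).det ≠ 0 := hdet.eventually_ne one_ne_zero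
  have hinv : Filter.Tendsto (fun m => (Cm m)⁻¹) Filter.atTop (nhds 1) := by
    have hconta : Continuous fun A : Matrix (Fin (n+1)) (Fin (n+1)) ℂ => A.adjugate :=
      continuous_id.matrix_adjugate
    have h1 := (hconta.tendsto 1).comp hCmt
    have h2 := hdet.inv₀ one_ne_zero
    have h3 := h2.smul h1
    have h4 : ∀ m, (Cm m)⁻¹ = ((Cm m).det)⁻¹ • (Cm m).adjugate := by
      intro m
      rw [Matrix.inv_def, Ring.inverse_eq_inv']
    rw [show (fun m => (Cm m)⁻¹) = fun m => ((Cm m).det)⁻¹ • (Cm m).adjugate from funext h4]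
    simpa [Matrix.adjugate_one] using h3
  have hkey : ∀ m, (Cm m).mulVec ((B m).mulVec vt) = (B m).mulVec (xt m) := by
    intro m
    rw [Matrix.mulVec_mulVec, Aspan_commute hcomm (hCmA m) (hBA m),
      ← Matrix.mulVec_mulVec, hCmv m]
  have h4 : Filter.Tendsto (fun m => ((Cm m)⁻¹).mulVec ((Cm m).mulVec ((B m).mulVec vt)))
      Filter.atTop (nhds (Fin.cons 1 y)) := by
    have h5 : Filter.Tendsto (fun m => (Cm m).mulVec ((B m).mulVec vt)) Filter.atTop
        (nhds (Fin.cons 1 y)) := by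
      rw [show (fun m => (Cm m).mulVec ((B m).mulVec vt))
        = fun m => (B m).mulVec (xt m) from funext hkey]
      exact hBxt
    have := tendsto_mulVec_seq hinv h5
    simpa [Matrix.one_mulVec] using this
  have hfin : Filter.Tendsto (fun m => (B m).mulVec vt) Filter.atTop
      (nhds (Fin.cons 1 y)) := by
    have heq : (fun m => ((Cm m)⁻¹).mulVec ((Cm m).mulVec ((B m).mulVec vt)))
        =ᶠ[Filter.atTop] (fun m => (B m).mulVec vt) := by
      filter_upwards [hdetne] with m hm
      rw [Matrix.mulVec_mulVec, Matrix.nonsing_inv_mul _ (Ne.isUnit hm), Matrix.one_mulVec]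
    exact Filter.Tendsto.congr' heq h4
  have hgv : ∀ m, (B m).mulVec vt = Fin.cons 1 (wordApply f (kk m) v) :=
    fun m => wordMat_mulVec f (kk m) v
  have hgt : Filter.Tendsto (fun m => wordApply f (kk m) v) Filter.atTop (nhds y) := by
    rw [tendsto_pi_nhds]
    intro i
    have h := tendsto_pi_nhds.mp hfin i.succ
    rw [show (fun m => ((B m).mulVec vt) i.succ)
      = fun m => wordApply f (kk m) v i from funext (fun m => by rw [hgv m, Fin.cons_succ])] at h
    simpa [Fin.cons_succ] using h
  have hmem : ∀ᶠ m in Filter.atTop, wordApply f (kk m) v ∈ affOrbit f v := by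
    filter_upwards [hksum.eventually_ge_atTop 1] with m hm
    exact ⟨kk m, hm, rfl⟩
  exact mem_closure_of_tendsto hgt hmem
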